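/- Let γ be a real-valued random variable satisfying a ≤ γ ≤ b almost surely, where 0 < a < b, and let n ≥ 1. Define the geometric partition ḡ_i = a^{1−i/n} b^{i/n} for i = 0, …, n, and set I_i = [ḡ_{i−1}, ḡ_i) for i < n and I_n = [ḡ_{n−1}, b]. Assume P_i = P(γ ∈ I_i) > 0 for every i, and set M_i = E[γ · 1_{I_i}(γ)]. Then E[1/γ] ≤ C_n · Σ_{i=1}^n P_i² / M_i, where C_n = ((b/a)^{1/n} + (a/b)^{1/n} + 2)/4. -/

import Mathlib

open MeasureTheory Real

/-- Welfare-loss bound for `n` groups: with the geometric partition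
`ḡ_i = a^{1−i/n} b^{i/n}` of `[a,b]`,
`E[1/γ] ≤ C_n · Σ_i P_i²/M_i` where `C_n = ((b/a)^{1/n} + (a/b)^{1/n} + 2)/4`. -/
theorem stmt_10 {Ω : Type*} [MeasurableSpace Ω] (P : Measure Ω) [IsProbabilityMeasure P]
    (a b : ℝ) (ha : 0 < a) (hab : a < b)
    (γ : Ω → ℝ) (hγ : Measurable γ)
    (hbd : ∀ᵐ ω ∂P, γ ω ∈ Set.Icc a b)
    (n : ℕ) (hn : 1 ≤ n)
    (g : ℕ → ℝ)
    (hg : ∀ i : ℕ, g i = a ^ ((1 : ℝ) - (i : ℝ)/(n : ℝ)) * b ^ ((i : ℝ)/(n : ℝ)))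
    (I : ℕ → Set ℝ)
    (hI : ∀ i : ℕ, 1 ≤ i → i < n → I i = Set.Ico (g (i-1)) (g i))
    (hIn : I n = Set.Icc (g (n-1)) b)
    (Pr : ℕ → ℝ) (hPr : ∀ i : ℕ, Pr i = (P (γ ⁻¹' I i)).toReal)
    (hPrpos : ∀ i ∈ Finset.Icc 1 n, 0 < Pr i)
    (M : ℕ → ℝ)
    (hM : ∀ i : ℕ, M i = ∫ ω, Set.indicator (I i) (fun x => x) (γ ω) ∂P) :
    ∫ ω, 1 / γ ω ∂P ≤
      ((b/a) ^ ((1:ℝ)/(n:ℝ)) + (a/b) ^ ((1:ℝ)/(n:ℝ)) + 2)/4 *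
        ∑ i ∈ Finset.Icc 1 n, (Pr i)^2 / M i := by
  classical
  have hb : 0 < b := ha.trans hab
  have hnpos : (0:ℝ) < n := by exact_mod_cast hn
  set r : ℝ := (b/a) ^ ((1:ℝ)/(n:ℝ)) with hrdef
  have hba1 : 1 < b / a := (one_lt_div ha).mpr hab
  have hr1 : 1 < r := by
    rw [hrdef]
    exact (Real.one_lt_rpow_iff_of_pos (by positivity)).mpr (Or.inl ⟨hba1, by positivity⟩)
  have hr0 : 0 < r := one_pos.trans hr1
  -- closed form for g
  have hg' : ∀ i : ℕ, g i = a * r ^ i := by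
    intro i
    have h1 : r ^ i = (b/a) ^ ((i:ℝ)/(n:ℝ)) := by
      rw [hrdef, ← Real.rpow_natCast ((b/a) ^ ((1:ℝ)/(n:ℝ))) i,
        ← Real.rpow_mul (by positivity)]
      congr 1
      field_simp
    have h2 : a ^ ((i:ℝ)/(n:ℝ)) ≠ 0 := (Real.rpow_pos_of_pos ha _).ne'
    rw [hg i, h1, Real.rpow_sub ha, Real.rpow_one, Real.div_rpow hb.le ha.le]
    field_simp
  have hg0 : g 0 = a := by simp [hg']
  have hgpos : ∀ i : ℕ, 0 < g i := fun i => by rw [hg']; positivity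
  have hgmono : ∀ i j : ℕ, i ≤ j → g i ≤ g j := by
    intro i j hij
    rw [hg' i, hg' j]
    exact mul_le_mul_of_nonneg_left (pow_le_pow_right₀ hr1.le hij) ha.le
  have hgn : g n = b := by
    have : (n:ℝ)/(n:ℝ) = 1 := div_self hnpos.ne'
    simp [hg n, this]
  have hstep : ∀ i : ℕ, 1 ≤ i → g i = g (i-1) * r := by
    intro i hi
    have h1 : (i-1)+1 = i := Nat.succ_pred_eq_of_pos hi
    have h2 : r ^ i = r ^ (i-1) * r := by rw [← pow_succ, h1]
    rw [hg' i, hg' (i-1), h2]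
    ring
  -- interval facts
  have hIsub : ∀ i : ℕ, 1 ≤ i → i ≤ n → I i ⊆ Set.Icc (g (i-1)) (g i) := by
    intro i h1 h2
    rcases lt_or_eq_of_le h2 with hlt | heq
    · rw [hI i h1 hlt]; exact Set.Ico_subset_Icc_self
    · rw [heq, hIn, ← hgn]
  have hImeas : ∀ i : ℕ, 1 ≤ i → i ≤ n → MeasurableSet (I i) := by
    intro i h1 h2
    rcases lt_or_eq_of_le h2 with hlt | heq
    · rw [hI i h1 hlt]; exact measurableSet_Ico
    · rw [heq, hIn]; exact measurableSet_Icc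
  have hdisj : ∀ i j : ℕ, 1 ≤ i → i < j → j ≤ n → ∀ x, x ∈ I i → x ∉ I j := by
    intro i j hi hij hj x hxi hxj
    have hxlt : x < g i := by
      rw [hI i hi (lt_of_lt_of_le hij hj)] at hxi
      exact hxi.2
    have hge : g (j-1) ≤ x := (hIsub j (by omega) hj hxj).1
    have hle : g i ≤ g (j-1) := hgmono _ _ (by omega)
    linarith
  have hexist : ∀ x ∈ Set.Icc a b, ∃ i : ℕ, 1 ≤ i ∧ i ≤ n ∧ x ∈ I i := by
    intro x hx
    by_cases hcase : g (n-1) ≤ x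
    · exact ⟨n, hn, le_refl n, by rw [hIn]; exact ⟨hcase, hx.2⟩⟩
    · push_neg at hcase
      have hex : ∃ k, x < g k := ⟨n-1, hcase⟩
      have hk1 : x < g (Nat.find hex) := Nat.find_spec hex
      have hkle : Nat.find hex ≤ n - 1 := Nat.find_le hcase
      have hk0 : 1 ≤ Nat.find hex := by
        rcases Nat.eq_zero_or_pos (Nat.find hex) with h | h
        · exfalso; rw [h, hg0] at hk1; linarith [hx.1]
        · exact h
      have hklt : Nat.find hex < n := by omega
      have hgle : g (Nat.find hex - 1) ≤ x := by
        by_contra h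
        push_neg at h
        exact Nat.find_min hex (show Nat.find hex - 1 < Nat.find hex by omega) h
      exact ⟨Nat.find hex, hk0, hklt.le, by
        rw [hI _ hk0 hklt]; exact ⟨hgle, hk1⟩⟩
  -- measurability and integrability
  set E : ℕ → Set Ω := fun i => γ ⁻¹' I i with hE
  have hEmeas : ∀ i : ℕ, 1 ≤ i → i ≤ n → MeasurableSet (E i) :=
    fun i h1 h2 => hγ (hImeas i h1 h2)
  have hγint : Integrable γ P := by
    refine Integrable.mono' (integrable_const b) hγ.aestronglyMeasurable ?_
    filter_upwards [hbd] with ω hω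
    rw [Real.norm_eq_abs, abs_le]
    exact ⟨le_trans (by linarith) hω.1, hω.2⟩
  have hinvmeas : Measurable fun ω => 1 / γ ω := by
    simpa [one_div] using hγ
  have hinvint : Integrable (fun ω => 1 / γ ω) P := by
    refine Integrable.mono' (integrable_const (1/a)) hinvmeas.aestronglyMeasurable ?_
    filter_upwards [hbd] with ω hω
    have h0 : 0 < γ ω := lt_of_lt_of_le ha hω.1
    rw [Real.norm_eq_abs, abs_of_pos (by positivity)]
    exact one_div_le_one_div_of_le ha hω.1
  have hM' : ∀ i : ℕ, M i = ∫ ω, (E i).indicator γ ω ∂P := by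
    intro i
    rw [hM i]
    rfl
  -- key per-interval bound
  have key : ∀ i : ℕ, 1 ≤ i → i ≤ n →
      ∫ ω, (E i).indicator (fun ω => 1 / γ ω) ω ∂P ≤
        (r + r⁻¹ + 2)/4 * ((Pr i)^2 / M i) := by
    intro i h1 h2
    have hc : 0 < g (i-1) := hgpos _
    have hd : g i = g (i-1) * r := hstep i h1
    set c := g (i-1) with hcdef
    have hsub : ∀ ω ∈ E i, γ ω ∈ Set.Icc c (c*r) := by
      intro ω hω
      have := hIsub i h1 h2 hω
      rwa [← hd]
    have hEm : MeasurableSet (E i) := hEmeas i h1 h2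
    have hind1 : Integrable ((E i).indicator fun _ => (1:ℝ)) P :=
      (integrable_const (1:ℝ)).indicator hEm
    have hindγ : Integrable ((E i).indicator γ) P := hγint.indicator hEm
    have hindinv : Integrable ((E i).indicator fun ω => 1 / γ ω) P := hinvint.indicator hEm
    have hp : 0 < Pr i := hPrpos i (Finset.mem_Icc.mpr ⟨h1, h2⟩)
    have hPrE : Pr i = (P (E i)).toReal := hPr i
    -- lower bound on M i
    have hMlb : c * Pr i ≤ M i := by
      have hcint : Integrable ((E i).indicator fun _ => c) P :=
        (integrable_const c).indicator hEm
      have hmono : ∀ ω, (E i).indicator (fun _ => c) ω ≤ (E i).indicator γ ω := by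
        intro ω
        by_cases hω : ω ∈ E i
        · rw [Set.indicator_of_mem hω, Set.indicator_of_mem hω]
          exact (hsub ω hω).1
        · rw [Set.indicator_of_notMem hω, Set.indicator_of_notMem hω]
      have := integral_mono hcint hindγ hmono
      rwa [integral_indicator_const c hEm, smul_eq_mul, measureReal_def, ← hPrE, mul_comm, ← hM' i] at this
    have hMpos : 0 < M i := lt_of_lt_of_le (by positivity) hMlb
    -- pointwise Kantorovich bound
    have hpt : ∀ ω, (E i).indicator (fun ω => 1/γ ω) ω ≤
        ((c + c*r) * (E i).indicator (fun _ => (1:ℝ)) ω - (E i).indicator γ ω) / (c*(c*r)) := by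
      intro ω
      by_cases hω : ω ∈ E i
      · rw [Set.indicator_of_mem hω, Set.indicator_of_mem hω, Set.indicator_of_mem hω]
        obtain ⟨hl, hu⟩ := hsub ω hω
        have hx : 0 < γ ω := lt_of_lt_of_le hc hl
        rw [div_le_div_iff₀ hx (by positivity)]
        nlinarith [mul_nonneg (sub_nonneg.mpr hl) (sub_nonneg.mpr hu)]
      · rw [Set.indicator_of_notMem hω, Set.indicator_of_notMem hω,
          Set.indicator_of_notMem hω]
        simp
    have hitg : ∫ ω, (E i).indicator (fun ω => 1/γ ω) ω ∂P ≤
        ((c + c*r) * Pr i - M i) / (c*(c*r)) := by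
      have hint2 : Integrable
          (fun ω => ((c + c*r) * (E i).indicator (fun _ => (1:ℝ)) ω -
            (E i).indicator γ ω) / (c*(c*r))) P :=
        ((hind1.const_mul (c + c*r)).sub hindγ).div_const _
      have h := integral_mono hindinv hint2 hpt
      rwa [integral_div, integral_sub (hind1.const_mul _) hindγ, integral_const_mul,
        integral_indicator_const (1:ℝ) hEm, smul_eq_mul, mul_one, measureReal_def, ← hPrE, ← hM' i] at h
    -- algebra
    have heq : (r + r⁻¹ + 2)/4 * ((Pr i)^2 / M i) - ((c + c*r) * Pr i - M i) / (c*(c*r)) =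
        ((r+1)*c*(Pr i) - 2*(M i))^2 / (4*r*(M i)*c^2) := by
      field_simp
      ring
    have hnn : 0 ≤ ((r+1)*c*(Pr i) - 2*(M i))^2 / (4*r*(M i)*c^2) :=
      div_nonneg (sq_nonneg _) (by positivity)
    linarith
  -- decomposition of the integral
  have hsum : ∫ ω, 1 / γ ω ∂P =
      ∑ i ∈ Finset.Icc 1 n, ∫ ω, (E i).indicator (fun ω => 1 / γ ω) ω ∂P := by
    rw [← integral_finset_sum _ (fun i hi => hinvint.indicator
      (hEmeas i (Finset.mem_Icc.mp hi).1 (Finset.mem_Icc.mp hi).2))]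
    refine integral_congr_ae ?_
    filter_upwards [hbd] with ω hω
    obtain ⟨i0, hi01, hi0n, hmem⟩ := hexist (γ ω) hω
    have hmemE : ω ∈ E i0 := hmem
    rw [Finset.sum_eq_single_of_mem i0 (Finset.mem_Icc.mpr ⟨hi01, hi0n⟩)]
    · exact (Set.indicator_of_mem hmemE (fun ω => 1 / γ ω)).symm
    · intro j hj hne
      obtain ⟨hj1, hj2⟩ := Finset.mem_Icc.mp hj
      apply Set.indicator_of_notMem
      intro hcon
      have hconI : γ ω ∈ I j := hcon
      rcases lt_or_gt_of_ne hne with h | h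
      · exact hdisj j i0 hj1 h hi0n _ hconI hmem
      · exact hdisj i0 j hi01 h hj2 _ hmem hconI
  -- combine
  have hconst : (a/b) ^ ((1:ℝ)/(n:ℝ)) = r⁻¹ := by
    rw [show a/b = (b/a)⁻¹ by rw [inv_div], Real.inv_rpow (by positivity), hrdef]
  rw [hsum, hconst]
  calc ∑ i ∈ Finset.Icc 1 n, ∫ ω, (E i).indicator (fun ω => 1 / γ ω) ω ∂P
      ≤ ∑ i ∈ Finset.Icc 1 n, (r + r⁻¹ + 2)/4 * ((Pr i)^2 / M i) :=
        Finset.sum_le_sum (fun i hi =>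
          key i (Finset.mem_Icc.mp hi).1 (Finset.mem_Icc.mp hi).2)
    _ = (r + r⁻¹ + 2)/4 * ∑ i ∈ Finset.Icc 1 n, (Pr i)^2 / M i := by
        rw [Finset.mul_sum]
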